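/- arXiv:1201.5414 — 2 statements merged into one kernel-verified Lean document; each statement's English description precedes it below -/
import Mathlib

section
/- Let a = [[1,0],[0,0]], b = [[1,1],[1,1]], c = [[1.1,0.5],[0.5,3.6]], d = [[3.6,0.5],[0.5,1.1]] be self-adjoint 2×2 real (or complex Hermitian) matrices. Then a < c, a < d, b < c, b < d in the Loewner order (strictly, i.e., the differences are positive definite), but there exists no self-adjoint 2×2 matrix x with a < x, b < x, x < c, and x < d (all strictly in the Loewner order). -/
open Matrix

private lemma posDef_two (m : Matrix (Fin 2) (Fin 2) ℝ) (hsym : m 1 0 = m 0 1)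
    (h1 : 0 < m 0 0) (h2 : 0 < m 0 0 * m 1 1 - m 0 1 * m 0 1) : m.PosDef := by
  apply Matrix.PosDef.of_dotProduct_mulVec_pos
  · ext i j
    fin_cases i <;> fin_cases j <;> simp [Matrix.conjTranspose_apply, hsym]
  · intro x hx
    have hx' : x 0 ≠ 0 ∨ x 1 ≠ 0 := by
      by_contra h
      push_neg at h
      exact hx (funext fun i => by fin_cases i <;> simp [h.1, h.2])
    simp only [dotProduct, mulVec, Fin.sum_univ_two, star, Pi.star_apply, star_trivial, id_eq, hsym]
    rcases hx' with h | h <;> nlinarith [sq_nonneg (x 0), sq_nonneg (x 1),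
      sq_nonneg (m 0 0 * x 0 + m 0 1 * x 1), sq_nonneg (m 0 1 * x 0 + m 1 1 * x 1),
      mul_pos h1 h2, mul_self_pos.mpr h]

private lemma posDef_entries {m : Matrix (Fin 2) (Fin 2) ℝ} (hm : m.PosDef) :
    0 < m 0 0 ∧ 0 < m 1 1 ∧ 0 < m 0 0 * m 1 1 - m 0 1 * m 1 0 := by
  refine ⟨?_, ?_, ?_⟩
  · have := hm.dotProduct_mulVec_pos (x := ![1, 0]) (by intro h; simpa using congrFun h 0)
    simpa [dotProduct, mulVec, Fin.sum_univ_two] using this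
  · have := hm.dotProduct_mulVec_pos (x := ![0, 1]) (by intro h; simpa using congrFun h 1)
    simpa [dotProduct, mulVec, Fin.sum_univ_two] using this
  · have := hm.det_pos
    rwa [Matrix.det_fin_two] at this

/-- The self-adjoint `2×2` real matrices fail the (2,2) tight Riesz interpolation
property in the Loewner order: with `a, b, c, d` as below, `a, b < c, d` strictly
(the differences are positive definite), but there is no self-adjoint `x` with
`a, b < x < c, d` strictly. -/
theorem loewner_no_22_interpolation :
    let a : Matrix (Fin 2) (Fin 2) ℝ := !![1, 0; 0, 0]
    let b : Matrix (Fin 2) (Fin 2) ℝ := !![1, 1; 1, 1]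
    let c : Matrix (Fin 2) (Fin 2) ℝ := !![1.1, 0.5; 0.5, 3.6]
    let d : Matrix (Fin 2) (Fin 2) ℝ := !![3.6, 0.5; 0.5, 1.1]
    a.IsHermitian ∧ b.IsHermitian ∧ c.IsHermitian ∧ d.IsHermitian ∧
    (c - a).PosDef ∧ (d - a).PosDef ∧ (c - b).PosDef ∧ (d - b).PosDef ∧
    ¬ ∃ x : Matrix (Fin 2) (Fin 2) ℝ, x.IsHermitian ∧
      (x - a).PosDef ∧ (x - b).PosDef ∧ (c - x).PosDef ∧ (d - x).PosDef := by
  intro a b c d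
  refine ⟨?_, ?_, ?_, ?_, ?_, ?_, ?_, ?_, ?_⟩
  · ext i j; fin_cases i <;> fin_cases j <;> simp [a, Matrix.conjTranspose_apply]
  · ext i j; fin_cases i <;> fin_cases j <;> simp [b, Matrix.conjTranspose_apply]
  · ext i j; fin_cases i <;> fin_cases j <;> simp [c, Matrix.conjTranspose_apply]
  · ext i j; fin_cases i <;> fin_cases j <;> simp [d, Matrix.conjTranspose_apply]
  · exact posDef_two _ (by norm_num [a, c]) (by norm_num [a, c]) (by norm_num [a, c])
  · exact posDef_two _ (by norm_num [a, d]) (by norm_num [a, d]) (by norm_num [a, d])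
  · exact posDef_two _ (by norm_num [b, c]) (by norm_num [b, c]) (by norm_num [b, c])
  · exact posDef_two _ (by norm_num [b, d]) (by norm_num [b, d]) (by norm_num [b, d])
  · rintro ⟨x, hx, h1, h2, h3, h4⟩
    have hq : x 1 0 = x 0 1 := by
      have := congrFun (congrFun hx 1) 0
      simpa [Matrix.conjTranspose_apply] using this.symm
    obtain ⟨e1, e2, e3⟩ := posDef_entries h1
    obtain ⟨f1, f2, f3⟩ := posDef_entries h2
    obtain ⟨g1, g2, g3⟩ := posDef_entries h3
    obtain ⟨k1, k2, k3⟩ := posDef_entries h4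
    norm_num [a, b, c, d, Matrix.sub_apply, hq] at e1 e2 e3 f1 f2 f3 g1 g2 g3 k1 k2 k3
    have hp : x 0 0 - 1 < 1/10 := by linarith
    have hr : x 1 1 < 11/10 := by linarith
    have hq2 : x 0 1 * x 0 1 < 11/100 := by nlinarith
    have hq1 : (x 0 1 - 1) * (x 0 1 - 1) < 1/100 := by nlinarith
    nlinarith [hq2, hq1]
end

section
/- The free group F₂ on two generators embeds into the free product Z/2 * Z/3 (there is an injective group homomorphism from the free group on two generators into the free product of the cyclic groups of orders 2 and 3). -/
open Monoid CoprodI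

namespace FP23

abbrev H : Bool → Type := fun b => cond b (Multiplicative (ZMod 2)) (Multiplicative (ZMod 3))

instance : ∀ b, Group (H b) := fun b => by cases b <;> (dsimp [H]; infer_instance)
instance : ∀ b, DecidableEq (H b) := fun b => by cases b <;> (dsimp [H]; infer_instance)

def x : H true := Multiplicative.ofAdd (1 : ZMod 2)
def y : H false := Multiplicative.ofAdd (1 : ZMod 3)
def y2 : H false := Multiplicative.ofAdd (2 : ZMod 3)

theorem Hfalse_cases (m : H false) : m = 1 ∨ m = y ∨ m = y2 :=
  (by decide : ∀ m : Multiplicative (ZMod 3), m = 1 ∨ m = y ∨ m = y2) m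
theorem Htrue_cases (m : H true) : m = 1 ∨ m = x :=
  (by decide : ∀ m : Multiplicative (ZMod 2), m = 1 ∨ m = x) m

open Monoid.CoprodI.Word

def lX : (Σ b, H b) := ⟨true, x⟩
def lY : (Σ b, H b) := ⟨false, y⟩
def lY2 : (Σ b, H b) := ⟨false, y2⟩

theorem fstIdx_def (w : Word H) : w.fstIdx = w.toList.head?.map Sigma.fst := rfl

theorem toList_cons_smul {i : Bool} (m : H i) (hm : m ≠ 1) (w : Word H)
    {l : List (Σ b, H b)} (hw : w.toList = l) (hl : ∀ p ∈ l.head?, p.1 ≠ i) :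
    (of m • w).toList = ⟨i, m⟩ :: l := by
  subst hw
  rw [← cons_eq_smul (h1 := ?_) (h2 := hm)]
  · rfl
  · rw [fstIdx_ne_iff]; exact fun p hp => (hl p hp).symm

theorem smul_smul_of {i : Bool} (m m' : H i) (w : Word H) :
    of m • of m' • w = of (m * m') • w := by
  rw [← mul_smul, ← MonoidHom.map_mul]

theorem of_one_smul' {i : Bool} (w : Word H) : of (1 : H i) • w = w := by
  rw [MonoidHom.map_one, one_smul]

/-- the two generators of the free subgroup -/
def a : Fin 2 → CoprodI H :=
  ![of x * of y * of x * of y2, of x * of y2 * of x * of y]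

theorem hX0 (w : Word H) (hw : w.toList.take 2 ≠ [lY, lX]) :
    ((of x * of y * of x * of y2 : CoprodI H) • w).toList.take 2 = [lX, lY] := by
  have hsm : (of x * of y * of x * of y2 : CoprodI H) • w
      = of x • (of y • (of x • (of y2 • w))) := by
    simp [mul_smul]
  rw [hsm]; clear hsm
  induction w using Word.consRecOn with
  | empty =>
      have t0 : (empty : Word H).toList = [] := rfl
      have t1 := toList_cons_smul y2 (by decide) _ t0 (by simp)
      have t2 := toList_cons_smul x (by decide) _ t1 (by simp [lX, lY, lY2])
      have t3 := toList_cons_smul y (by decide) _ t2 (by simp [lX, lY, lY2])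
      have t4 := toList_cons_smul x (by decide) _ t3 (by simp [lX, lY, lY2])
      rw [t4]; rfl
  | cons i m w' h1 h2 ih =>
      clear ih
      rw [cons_eq_smul]
      cases i with
      | true =>
          have t0 := toList_cons_smul m h2 w' rfl
            (by rw [fstIdx_ne_iff] at h1; exact fun p hp => (h1 p hp).symm)
          have t1 := toList_cons_smul y2 (by decide) _ t0 (by simp)
          have t2 := toList_cons_smul x (by decide) _ t1 (by simp [lY2])
          have t3 := toList_cons_smul y (by decide) _ t2 (by simp [lX])
          have t4 := toList_cons_smul x (by decide) _ t3 (by simp [lY])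
          rw [t4]; rfl
      | false =>
          rcases Hfalse_cases m with rfl | rfl | rfl
          · exact absurd rfl h2
          · have hnil : w'.toList = [] := by
              rcases hl : w'.toList with _ | ⟨⟨j, m'⟩, rest⟩
              · rfl
              · exfalso
                cases j with
                | false => exact h1 (by rw [fstIdx_def, hl]; rfl)
                | true =>
                    have hm' : m' ≠ 1 := w'.ne_one _ (by rw [hl]; exact List.mem_cons_self)
                    rcases Htrue_cases m' with rfl | rfl
                    · exact hm' rfl
                    · exact hw (by simp only [cons_toList, hl]; rfl)
            rw [smul_smul_of, (by decide : y2 * y = 1), of_one_smul']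
            have t1 := toList_cons_smul x (by decide) _ hnil (by simp)
            have t2 := toList_cons_smul y (by decide) _ t1 (by simp [lX])
            have t3 := toList_cons_smul x (by decide) _ t2 (by simp [lY])
            rw [t3]; rfl
          · rw [smul_smul_of, (by decide : y2 * y2 = y)]
            have t0 := toList_cons_smul y (by decide) w' rfl
              (by rw [fstIdx_ne_iff] at h1; exact fun p hp => (h1 p hp).symm)
            have t1 := toList_cons_smul x (by decide) _ t0 (by simp [lY])
            have t2 := toList_cons_smul y (by decide) _ t1 (by simp [lX])
            have t3 := toList_cons_smul x (by decide) _ t2 (by simp [lY])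
            rw [t3]; rfl

theorem hX1 (w : Word H) (hw : w.toList.take 2 ≠ [lY2, lX]) :
    ((of x * of y2 * of x * of y : CoprodI H) • w).toList.take 2 = [lX, lY2] := by
  have hsm : (of x * of y2 * of x * of y : CoprodI H) • w
      = of x • (of y2 • (of x • (of y • w))) := by
    simp [mul_smul]
  rw [hsm]; clear hsm
  induction w using Word.consRecOn with
  | empty =>
      have t0 : (empty : Word H).toList = [] := rfl
      have t1 := toList_cons_smul y (by decide) _ t0 (by simp)
      have t2 := toList_cons_smul x (by decide) _ t1 (by simp [lX, lY, lY2])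
      have t3 := toList_cons_smul y2 (by decide) _ t2 (by simp [lX, lY, lY2])
      have t4 := toList_cons_smul x (by decide) _ t3 (by simp [lX, lY, lY2])
      rw [t4]; rfl
  | cons i m w' h1 h2 ih =>
      clear ih
      rw [cons_eq_smul]
      cases i with
      | true =>
          have t0 := toList_cons_smul m h2 w' rfl
            (by rw [fstIdx_ne_iff] at h1; exact fun p hp => (h1 p hp).symm)
          have t1 := toList_cons_smul y (by decide) _ t0 (by simp)
          have t2 := toList_cons_smul x (by decide) _ t1 (by simp [lY])
          have t3 := toList_cons_smul y2 (by decide) _ t2 (by simp [lX])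
          have t4 := toList_cons_smul x (by decide) _ t3 (by simp [lY2])
          rw [t4]; rfl
      | false =>
          rcases Hfalse_cases m with rfl | rfl | rfl
          · exact absurd rfl h2
          · rw [smul_smul_of, (by decide : y * y = y2)]
            have t0 := toList_cons_smul y2 (by decide) w' rfl
              (by rw [fstIdx_ne_iff] at h1; exact fun p hp => (h1 p hp).symm)
            have t1 := toList_cons_smul x (by decide) _ t0 (by simp [lY2])
            have t2 := toList_cons_smul y2 (by decide) _ t1 (by simp [lX])
            have t3 := toList_cons_smul x (by decide) _ t2 (by simp [lY2])
            rw [t3]; rfl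
          · have hnil : w'.toList = [] := by
              rcases hl : w'.toList with _ | ⟨⟨j, m'⟩, rest⟩
              · rfl
              · exfalso
                cases j with
                | false => exact h1 (by rw [fstIdx_def, hl]; rfl)
                | true =>
                    have hm' : m' ≠ 1 := w'.ne_one _ (by rw [hl]; exact List.mem_cons_self)
                    rcases Htrue_cases m' with rfl | rfl
                    · exact hm' rfl
                    · exact hw (by simp only [cons_toList, hl]; rfl)
            rw [smul_smul_of, (by decide : y * y2 = 1), of_one_smul']
            have t1 := toList_cons_smul x (by decide) _ hnil (by simp)
            have t2 := toList_cons_smul y2 (by decide) _ t1 (by simp [lX])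
            have t3 := toList_cons_smul x (by decide) _ t2 (by simp [lY2])
            rw [t3]; rfl

theorem hY0 (w : Word H) (hw : w.toList.take 2 ≠ [lX, lY]) :
    ((of y * of x * of y2 * of x : CoprodI H) • w).toList.take 2 = [lY, lX] := by
  have hsm : (of y * of x * of y2 * of x : CoprodI H) • w
      = of y • (of x • (of y2 • (of x • w))) := by
    simp [mul_smul]
  rw [hsm]; clear hsm
  induction w using Word.consRecOn with
  | empty =>
      have t0 : (empty : Word H).toList = [] := rfl
      have t1 := toList_cons_smul x (by decide) _ t0 (by simp)
      have t2 := toList_cons_smul y2 (by decide) _ t1 (by simp [lX])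
      have t3 := toList_cons_smul x (by decide) _ t2 (by simp [lY2])
      have t4 := toList_cons_smul y (by decide) _ t3 (by simp [lX])
      rw [t4]; rfl
  | cons i m w' h1 h2 ih =>
      clear ih
      rw [cons_eq_smul]
      cases i with
      | false =>
          have t0 := toList_cons_smul m h2 w' rfl
            (by rw [fstIdx_ne_iff] at h1; exact fun p hp => (h1 p hp).symm)
          have t1 := toList_cons_smul x (by decide) _ t0 (by simp)
          have t2 := toList_cons_smul y2 (by decide) _ t1 (by simp [lX])
          have t3 := toList_cons_smul x (by decide) _ t2 (by simp [lY2])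
          have t4 := toList_cons_smul y (by decide) _ t3 (by simp [lX])
          rw [t4]; rfl
      | true =>
          rcases Htrue_cases m with rfl | rfl
          · exact absurd rfl h2
          · rw [smul_smul_of, (by decide : x * x = 1), of_one_smul']
            induction w' using Word.consRecOn with
            | empty =>
                have t0 : (empty : Word H).toList = [] := rfl
                have t1 := toList_cons_smul y2 (by decide) _ t0 (by simp)
                have t2 := toList_cons_smul x (by decide) _ t1 (by simp [lY2])
                have t3 := toList_cons_smul y (by decide) _ t2 (by simp [lX])
                rw [t3]; rfl
            | cons j m' w'' h1' h2' ih' =>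
                clear ih'
                rw [cons_eq_smul]
                cases j with
                | true => exact absurd (by rw [fstIdx_def]; rfl) h1
                | false =>
                    rcases Hfalse_cases m' with rfl | rfl | rfl
                    · exact absurd rfl h2'
                    · exact absurd (by simp only [cons_toList]; rfl) hw
                    · rw [smul_smul_of, (by decide : y2 * y2 = y)]
                      have t0 := toList_cons_smul y (by decide) w'' rfl
                        (by rw [fstIdx_ne_iff] at h1'; exact fun p hp => (h1' p hp).symm)
                      have t1 := toList_cons_smul x (by decide) _ t0 (by simp [lY])
                      have t2 := toList_cons_smul y (by decide) _ t1 (by simp [lX])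
                      rw [t2]; rfl

theorem hY1 (w : Word H) (hw : w.toList.take 2 ≠ [lX, lY2]) :
    ((of y2 * of x * of y * of x : CoprodI H) • w).toList.take 2 = [lY2, lX] := by
  have hsm : (of y2 * of x * of y * of x : CoprodI H) • w
      = of y2 • (of x • (of y • (of x • w))) := by
    simp [mul_smul]
  rw [hsm]; clear hsm
  induction w using Word.consRecOn with
  | empty =>
      have t0 : (empty : Word H).toList = [] := rfl
      have t1 := toList_cons_smul x (by decide) _ t0 (by simp)
      have t2 := toList_cons_smul y (by decide) _ t1 (by simp [lX])
      have t3 := toList_cons_smul x (by decide) _ t2 (by simp [lY])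
      have t4 := toList_cons_smul y2 (by decide) _ t3 (by simp [lX])
      rw [t4]; rfl
  | cons i m w' h1 h2 ih =>
      clear ih
      rw [cons_eq_smul]
      cases i with
      | false =>
          have t0 := toList_cons_smul m h2 w' rfl
            (by rw [fstIdx_ne_iff] at h1; exact fun p hp => (h1 p hp).symm)
          have t1 := toList_cons_smul x (by decide) _ t0 (by simp)
          have t2 := toList_cons_smul y (by decide) _ t1 (by simp [lX])
          have t3 := toList_cons_smul x (by decide) _ t2 (by simp [lY])
          have t4 := toList_cons_smul y2 (by decide) _ t3 (by simp [lX])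
          rw [t4]; rfl
      | true =>
          rcases Htrue_cases m with rfl | rfl
          · exact absurd rfl h2
          · rw [smul_smul_of, (by decide : x * x = 1), of_one_smul']
            induction w' using Word.consRecOn with
            | empty =>
                have t0 : (empty : Word H).toList = [] := rfl
                have t1 := toList_cons_smul y (by decide) _ t0 (by simp)
                have t2 := toList_cons_smul x (by decide) _ t1 (by simp [lY])
                have t3 := toList_cons_smul y2 (by decide) _ t2 (by simp [lX])
                rw [t3]; rfl
            | cons j m' w'' h1' h2' ih' =>
                clear ih'
                rw [cons_eq_smul]
                cases j with
                | true => exact absurd (by rw [fstIdx_def]; rfl) h1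
                | false =>
                    rcases Hfalse_cases m' with rfl | rfl | rfl
                    · exact absurd rfl h2'
                    · rw [smul_smul_of, (by decide : y * y = y2)]
                      have t0 := toList_cons_smul y2 (by decide) w'' rfl
                        (by rw [fstIdx_ne_iff] at h1'; exact fun p hp => (h1' p hp).symm)
                      have t1 := toList_cons_smul x (by decide) _ t0 (by simp [lY2])
                      have t2 := toList_cons_smul y2 (by decide) _ t1 (by simp [lX])
                      rw [t2]; rfl
                    · exact absurd (by simp only [cons_toList]; rfl) hw

/-- ping-pong sets -/
def Xs : Fin 2 → Set (Word H) :=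
  ![{w | w.toList.take 2 = [lX, lY]}, {w | w.toList.take 2 = [lX, lY2]}]
def Ys : Fin 2 → Set (Word H) :=
  ![{w | w.toList.take 2 = [lY, lX]}, {w | w.toList.take 2 = [lY2, lX]}]

theorem disj_of_ne {A B : List (Σ b, H b)} (h : A ≠ B) :
    Disjoint {w : Word H | w.toList.take 2 = A} {w : Word H | w.toList.take 2 = B} :=
  Set.disjoint_left.mpr fun {w} h1 h2 => h (h1.symm.trans h2)

theorem key_inj : Function.Injective (FreeGroup.lift a) := by
  apply FreeGroup.injective_lift_of_ping_pong a Xs Ys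
  · intro i
    fin_cases i
    · exact ⟨⟨[lX, lY], by decide, by simp [lX, lY]⟩, rfl⟩
    · exact ⟨⟨[lX, lY2], by decide, by simp [lX, lY2]⟩, rfl⟩
  · intro i j hij
    fin_cases i <;> fin_cases j <;> first
      | exact absurd rfl hij
      | exact disj_of_ne (by decide)
  · intro i j hij
    fin_cases i <;> fin_cases j <;> first
      | exact absurd rfl hij
      | exact disj_of_ne (by decide)
  · intro i j
    fin_cases i <;> fin_cases j <;> exact disj_of_ne (by decide)
  · intro i
    rintro v ⟨w, hw, rfl⟩
    fin_cases i
    · exact hX0 w hw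
    · exact hX1 w hw
  · intro i
    rintro v ⟨w, hw, rfl⟩
    have hinv0 : (a 0)⁻¹ = of y * of x * of y2 * of x := by
      apply inv_eq_of_mul_eq_one_right
      have c1 : ∀ z : CoprodI H, of y2 * (of y * z) = z := fun z => by
        rw [← mul_assoc, ← MonoidHom.map_mul, (by decide : y2 * y = 1),
          MonoidHom.map_one, one_mul]
      have c2 : ∀ z : CoprodI H, of x * (of x * z) = z := fun z => by
        rw [← mul_assoc, ← MonoidHom.map_mul, (by decide : x * x = 1),
          MonoidHom.map_one, one_mul]
      have c3 : ∀ z : CoprodI H, of y * (of y2 * z) = z := fun z => by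
        rw [← mul_assoc, ← MonoidHom.map_mul, (by decide : y * y2 = 1),
          MonoidHom.map_one, one_mul]
      show (of x * of y * of x * of y2) * (of y * of x * of y2 * of x) = 1
      simp only [mul_assoc, c1, c2, c3]
      rw [← MonoidHom.map_mul, (by decide : x * x = 1), MonoidHom.map_one]
    have hinv1 : (a 1)⁻¹ = of y2 * of x * of y * of x := by
      apply inv_eq_of_mul_eq_one_right
      have c1 : ∀ z : CoprodI H, of y * (of y2 * z) = z := fun z => by
        rw [← mul_assoc, ← MonoidHom.map_mul, (by decide : y * y2 = 1),
          MonoidHom.map_one, one_mul]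
      have c2 : ∀ z : CoprodI H, of x * (of x * z) = z := fun z => by
        rw [← mul_assoc, ← MonoidHom.map_mul, (by decide : x * x = 1),
          MonoidHom.map_one, one_mul]
      have c3 : ∀ z : CoprodI H, of y2 * (of y * z) = z := fun z => by
        rw [← mul_assoc, ← MonoidHom.map_mul, (by decide : y2 * y = 1),
          MonoidHom.map_one, one_mul]
      show (of x * of y2 * of x * of y) * (of y2 * of x * of y * of x) = 1
      simp only [mul_assoc, c1, c2, c3]
      rw [← MonoidHom.map_mul, (by decide : x * x = 1), MonoidHom.map_one]
    fin_cases i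
    · show ((a 0)⁻¹ • w) ∈ Ys 0
      rw [hinv0]
      exact hY0 w hw
    · show ((a 1)⁻¹ • w) ∈ Ys 1
      rw [hinv1]
      exact hY1 w hw

end FP23

/-- The free group on two generators embeds into the free product
`ℤ/2 ∗ ℤ/3`. -/
theorem freeGroup_two_embeds_in_Z2_free_Z3 :
    ∃ φ : FreeGroup (Fin 2) →*
        Monoid.Coprod (Multiplicative (ZMod 2)) (Multiplicative (ZMod 3)),
      Function.Injective φ := by
  classical
  let M := Multiplicative (ZMod 2)
  let N := Multiplicative (ZMod 3)
  let b : Fin 2 → Monoid.Coprod M N :=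
    ![Coprod.inl FP23.x * Coprod.inr FP23.y * Coprod.inl FP23.x * Coprod.inr FP23.y2,
      Coprod.inl FP23.x * Coprod.inr FP23.y2 * Coprod.inl FP23.x * Coprod.inr FP23.y]
  let φ : FreeGroup (Fin 2) →* Monoid.Coprod M N := FreeGroup.lift b
  let f : M →* Monoid.CoprodI FP23.H :=
    (Monoid.CoprodI.of (i := true) : FP23.H true →* Monoid.CoprodI FP23.H)
  let g : N →* Monoid.CoprodI FP23.H :=
    (Monoid.CoprodI.of (i := false) : FP23.H false →* Monoid.CoprodI FP23.H)
  let ψ : Monoid.Coprod M N →* Monoid.CoprodI FP23.H := Coprod.lift f g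
  have hcomp : ψ.comp φ = FreeGroup.lift FP23.a := by
    apply FreeGroup.ext_hom
    intro i
    fin_cases i <;>
      simp [φ, ψ, b, f, g, FP23.a, map_mul]
  refine ⟨φ, ?_⟩
  have h2 : Function.Injective (⇑ψ ∘ ⇑φ) := by
    rw [show ⇑ψ ∘ ⇑φ = ⇑(FreeGroup.lift FP23.a) from by rw [← MonoidHom.coe_comp, hcomp]]
    exact FP23.key_inj
  exact Function.Injective.of_comp h2
end
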